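/- arXiv:2508.13252 — 2 statements merged into one kernel-verified Lean document; each statement's English description precedes it below -/
import Mathlib

section
/- For σ > 0, γ > 0, the second moment (hence the variance, since the mean is zero) of the Dual Voigt(γ, σ²) distribution is ∫_ℝ u² p'(u) du = γ²/σ⁴ + 1/σ² − (γ/σ³) · φ(γ/σ)/(1 − Φ(γ/σ)), where φ and Φ are the standard normal density and cumulative distribution function. -/
open MeasureTheory ProbabilityTheory Real

/-- The standard normal density. -/
noncomputable def stdNormalPDF (t : ℝ) : ℝ := 1 / Real.sqrt (2 * π) * Real.exp (-t ^ 2 / 2)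

/-- The standard normal cumulative distribution function. -/
noncomputable def stdNormalCDF (t : ℝ) : ℝ := ∫ s in Set.Iic t, stdNormalPDF s

/-- The Dual Voigt(γ, σ²) density. -/
noncomputable def dualVoigtDensity (σ γ : ℝ) (u : ℝ) : ℝ :=
  1 / (2 * (1 - stdNormalCDF (γ / σ))) * (σ / Real.sqrt (2 * π)) *
    Real.exp (-γ ^ 2 / (2 * σ ^ 2)) * Real.exp (-γ * |u| - σ ^ 2 * u ^ 2 / 2)

section DualVoigtAux

open Set Filter Topology

private lemma dv_hfun0 : (fun t : ℝ => exp (-t ^ 2 / 2)) = (fun t : ℝ => exp (-(1/2 : ℝ) * t ^ 2)) := by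
  funext t; congr 1; ring

private lemma dv_int_g0 : Integrable (fun t : ℝ => exp (-t ^ 2 / 2)) := by
  rw [dv_hfun0]; exact integrable_exp_neg_mul_sq (by norm_num)

private lemma dv_int_g1 : Integrable (fun t : ℝ => t * exp (-t ^ 2 / 2)) := by
  have h := integrable_mul_exp_neg_mul_sq (b := (1/2 : ℝ)) (by norm_num)
  refine h.congr (Filter.Eventually.of_forall fun t => ?_)
  simp only; congr 2; ring

private lemma dv_int_g2 : Integrable (fun t : ℝ => t ^ 2 * exp (-t ^ 2 / 2)) := by
  have h : Integrable (fun x : ℝ => x ^ (2:ℝ) * exp (-(1/2:ℝ) * x ^ 2)) :=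
    integrable_rpow_mul_exp_neg_mul_sq (by norm_num) (by norm_num)
  refine h.congr (Filter.Eventually.of_forall fun t => ?_)
  have h2 : (t:ℝ) ^ (2:ℝ) = t ^ (2:ℕ) := by
    rw [← Real.rpow_natCast]; norm_num
  simp only; rw [h2]; congr 2; ring

private lemma dv_tend0 : Tendsto (fun t : ℝ => exp (-t ^ 2 / 2)) atTop (𝓝 0) := by
  rw [dv_hfun0]
  have h1 : Tendsto (fun t : ℝ => (1/2 : ℝ) * t ^ 2) atTop atTop :=
    Tendsto.const_mul_atTop (by norm_num) (tendsto_pow_atTop (by norm_num))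
  have h := Real.tendsto_exp_neg_atTop_nhds_zero.comp h1
  refine h.congr fun t => ?_
  simp only [Function.comp]; congr 2; ring

private lemma dv_tend1 : Tendsto (fun t : ℝ => t * exp (-t ^ 2 / 2)) atTop (𝓝 0) := by
  have h := rpow_mul_exp_neg_mul_sq_isLittleO_exp_neg (b := (1/2:ℝ)) (by norm_num) 1
  have h1 : Tendsto (fun x : ℝ => (1/2:ℝ) * x) atTop atTop :=
    Tendsto.const_mul_atTop (by norm_num) tendsto_id
  have h0 : Tendsto (fun x : ℝ => exp (-(1/2:ℝ) * x)) atTop (𝓝 0) := by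
    have := Real.tendsto_exp_neg_atTop_nhds_zero.comp h1
    refine this.congr fun t => ?_
    simp only [Function.comp]; congr 2; ring
  have h2 := h.trans_tendsto h0
  refine h2.congr fun t => ?_
  rw [Real.rpow_one]; congr 2; ring

private lemma dv_deriv_exp_sq (t : ℝ) :
    HasDerivAt (fun t : ℝ => exp (-t ^ 2 / 2)) (-t * exp (-t ^ 2 / 2)) t := by
  have h1 : HasDerivAt (fun t : ℝ => -t ^ 2 / 2) (-t) t := by
    have := ((hasDerivAt_pow 2 t).neg).div_const 2
    refine this.congr_deriv ?_; norm_num; ring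
  simpa [mul_comm] using h1.exp

private lemma dv_tail1 (c : ℝ) : (∫ t in Ioi c, t * exp (-t ^ 2 / 2)) = exp (-c ^ 2 / 2) := by
  have hd : ∀ x ∈ Ici c, HasDerivAt (fun t : ℝ => -exp (-t ^ 2 / 2)) (x * exp (-x ^ 2 / 2)) x := by
    intro x _
    have := (dv_deriv_exp_sq x).neg
    exact this.congr_deriv (by ring)
  have h := integral_Ioi_of_hasDerivAt_of_tendsto' hd dv_int_g1.integrableOn
    (by simpa using dv_tend0.neg)
  simpa using h

private lemma dv_tail2 (c : ℝ) : (∫ t in Ioi c, t ^ 2 * exp (-t ^ 2 / 2)) =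
    c * exp (-c ^ 2 / 2) + ∫ t in Ioi c, exp (-t ^ 2 / 2) := by
  have hd : ∀ x ∈ Ici c, HasDerivAt (fun t : ℝ => -(t * exp (-t ^ 2 / 2)))
      (x ^ 2 * exp (-x ^ 2 / 2) - exp (-x ^ 2 / 2)) x := by
    intro x _
    have h1 : HasDerivAt (fun t : ℝ => t * exp (-t ^ 2 / 2))
        (1 * exp (-x ^ 2 / 2) + x * (-x * exp (-x ^ 2 / 2))) x :=
      (hasDerivAt_id x).mul (dv_deriv_exp_sq x)
    have := h1.neg
    exact this.congr_deriv (by ring)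
  have hint : IntegrableOn (fun t : ℝ => t ^ 2 * exp (-t ^ 2 / 2) - exp (-t ^ 2 / 2)) (Ioi c) :=
    (dv_int_g2.sub dv_int_g0).integrableOn
  have h := integral_Ioi_of_hasDerivAt_of_tendsto' hd hint (by simpa using dv_tend1.neg)
  rw [integral_sub dv_int_g2.integrableOn dv_int_g0.integrableOn] at h
  simp only [neg_neg, zero_sub] at h
  linarith [h]

private lemma dv_gauss_total : (∫ t : ℝ, exp (-t ^ 2 / 2)) = Real.sqrt (2 * π) := by
  rw [dv_hfun0, integral_gaussian]
  congr 1; ring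

private lemma dv_K_pos (c : ℝ) : 0 < ∫ t in Ioi c, exp (-t ^ 2 / 2) := by
  rw [setIntegral_pos_iff_support_of_nonneg_ae
    (Filter.Eventually.of_forall fun t => (exp_pos _).le) dv_int_g0.integrableOn]
  have : Function.support (fun t : ℝ => exp (-t ^ 2 / 2)) = univ := by
    ext t; simp [Function.support, (exp_pos _).ne']
  rw [this, univ_inter]
  simp [Real.volume_Ioi]

private lemma dv_aux_shift (g : ℝ → ℝ) (b c : ℝ) :
    (∫ x in Ioi b, g (x + c)) = ∫ t in Ioi (b + c), g t := by
  have h : MeasurableEmbedding (fun x : ℝ => x + c) :=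
    (Homeomorph.addRight c).measurableEmbedding
  have hpre : (fun x : ℝ => x + c) ⁻¹' Ioi (b + c) = Ioi b := by
    ext x; simp
  symm
  calc (∫ t in Ioi (b + c), g t)
      = ∫ t in Ioi (b + c), g t ∂(Measure.map (fun x => x + c) volume) := by
        rw [map_add_right_eq_self]
    _ = ∫ x in (fun x : ℝ => x + c) ⁻¹' Ioi (b + c), g (x + c) := h.setIntegral_map g _
    _ = ∫ x in Ioi b, g (x + c) := by rw [hpre]

private lemma dv_s2pi_pos : 0 < Real.sqrt (2 * π) := Real.sqrt_pos.mpr (by positivity)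

private lemma dv_cdf_compl (c : ℝ) :
    1 - stdNormalCDF c = (∫ t in Ioi c, exp (-t ^ 2 / 2)) / Real.sqrt (2 * π) := by
  have hsplit := intervalIntegral.integral_Iic_add_Ioi (b := c)
    dv_int_g0.integrableOn dv_int_g0.integrableOn
  rw [dv_gauss_total] at hsplit
  have hcdf : stdNormalCDF c = 1 / Real.sqrt (2 * π) * ∫ t in Iic c, exp (-t ^ 2 / 2) := by
    rw [stdNormalCDF]
    simp only [stdNormalPDF]
    rw [integral_const_mul]
  rw [hcdf, ← hsplit]
  have hpos : 0 < (∫ t in Iic c, exp (-t ^ 2 / 2)) + ∫ t in Ioi c, exp (-t ^ 2 / 2) := by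
    rw [hsplit]; exact dv_s2pi_pos
  have hne := hpos.ne'
  rw [one_div, ← div_eq_inv_mul, one_sub_div hne]; congr 1; ring

noncomputable def dvG (σ c : ℝ) (t : ℝ) : ℝ := ((t - c) / σ) ^ 2 * exp (-t ^ 2 / 2)

private lemma dv_sub_lemma (σ c : ℝ) (hσ : 0 < σ) :
    (∫ x in Ioi (0:ℝ), dvG σ c (σ * x + c)) = σ⁻¹ * ∫ t in Ioi c, dvG σ c t := by
  have h1 : (fun x : ℝ => dvG σ c (σ * x + c)) = fun x => (fun y => dvG σ c (y + c)) (σ * x) := rfl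
  rw [h1, integral_comp_mul_left_Ioi (fun y => dvG σ c (y + c)) 0 hσ, mul_zero,
    dv_aux_shift, zero_add, smul_eq_mul]

private lemma dv_eval_g (σ c : ℝ) (hσ : σ ≠ 0) :
    (∫ t in Ioi c, dvG σ c t) =
      (σ ^ 2)⁻¹ * ((1 + c ^ 2) * (∫ t in Ioi c, exp (-t ^ 2 / 2)) - c * exp (-c ^ 2 / 2)) := by
  have h1 : ∀ t : ℝ, dvG σ c t =
      (σ ^ 2)⁻¹ * (t ^ 2 * exp (-t ^ 2 / 2)) - ((σ ^ 2)⁻¹ * (2 * c)) * (t * exp (-t ^ 2 / 2))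
        + ((σ ^ 2)⁻¹ * c ^ 2) * exp (-t ^ 2 / 2) := by
    intro t; rw [dvG, div_pow]; field_simp; ring
  rw [setIntegral_congr_fun measurableSet_Ioi (fun t _ => h1 t)]
  have i2 : IntegrableOn (fun x : ℝ => (σ ^ 2)⁻¹ * (x ^ 2 * exp (-x ^ 2 / 2))) (Ioi c) :=
    (dv_int_g2.integrableOn).const_mul _
  have i1 : IntegrableOn (fun x : ℝ => ((σ ^ 2)⁻¹ * (2 * c)) * (x * exp (-x ^ 2 / 2))) (Ioi c) :=
    (dv_int_g1.integrableOn).const_mul _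
  have i0 : IntegrableOn (fun x : ℝ => ((σ ^ 2)⁻¹ * c ^ 2) * exp (-x ^ 2 / 2)) (Ioi c) :=
    (dv_int_g0.integrableOn).const_mul _
  have i21 : IntegrableOn (fun x : ℝ => (σ ^ 2)⁻¹ * (x ^ 2 * exp (-x ^ 2 / 2))
      - ((σ ^ 2)⁻¹ * (2 * c)) * (x * exp (-x ^ 2 / 2))) (Ioi c) := i2.sub i1
  rw [integral_add i21 i0, integral_sub i2 i1,
    integral_const_mul, integral_const_mul, integral_const_mul, dv_tail1, dv_tail2]
  ring

end DualVoigtAux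

open Set in
/-- the second moment (hence the variance) of the Dual Voigt(γ, σ²)
distribution is γ²/σ⁴ + 1/σ² − (γ/σ³)·φ(γ/σ)/(1 − Φ(γ/σ)). -/
theorem dualVoigt_second_moment (σ γ : ℝ) (hσ : 0 < σ) (hγ : 0 < γ) :
    (∫ u : ℝ, u ^ 2 * dualVoigtDensity σ γ u) =
      γ ^ 2 / σ ^ 4 + 1 / σ ^ 2 -
        γ / σ ^ 3 * (stdNormalPDF (γ / σ) / (1 - stdNormalCDF (γ / σ))) := by
  have hσ' : σ ≠ 0 := hσ.ne'
  set c := γ / σ with hc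
  set K := ∫ t in Ioi c, exp (-t ^ 2 / 2) with hKdef
  have hKpos : 0 < K := dv_K_pos c
  set E := exp (-c ^ 2 / 2) with hEdef
  have hEpos : 0 < E := exp_pos _
  have hcdf : 1 - stdNormalCDF c = K / Real.sqrt (2 * π) := dv_cdf_compl c
  have hexpconst : Real.exp (-γ ^ 2 / (2 * σ ^ 2)) = E := by
    rw [hEdef]; congr 1; rw [hc]; field_simp
  have hEinv : exp (c ^ 2 / 2) = E⁻¹ := by
    rw [hEdef, ← Real.exp_neg]; congr 1; ring
  have hA : ∀ u : ℝ, u ^ 2 * dualVoigtDensity σ γ u =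
      (1 / (2 * (1 - stdNormalCDF c)) * (σ / Real.sqrt (2 * π)) * E) *
        (u ^ 2 * exp (-γ * |u| - σ ^ 2 * u ^ 2 / 2)) := by
    intro u
    simp only [dualVoigtDensity, ← hc, hexpconst]
    ring
  simp_rw [hA]
  rw [integral_const_mul]
  set f0 : ℝ → ℝ := fun x : ℝ => x ^ 2 * exp (-γ * x - σ ^ 2 * x ^ 2 / 2) with hf0
  have habs : (fun u : ℝ => u ^ 2 * exp (-γ * |u| - σ ^ 2 * u ^ 2 / 2)) =
      (fun u : ℝ => f0 |u|) := by
    funext u; rw [hf0]; simp only [sq_abs]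
  rw [habs, integral_comp_abs]
  have hf0pt : ∀ x : ℝ, f0 x = x ^ 2 * exp (-γ * x - σ ^ 2 * x ^ 2 / 2) := fun x => rfl
  simp_rw [hf0pt]
  have hpoint : ∀ x : ℝ, x ^ 2 * exp (-γ * x - σ ^ 2 * x ^ 2 / 2) = E⁻¹ * dvG σ c (σ * x + c) := by
    intro x
    rw [dvG]
    have h1 : (σ * x + c - c) / σ = x := by field_simp; ring
    rw [h1, ← hEinv]
    rw [show exp (c ^ 2 / 2) * (x ^ 2 * exp (-(σ * x + c) ^ 2 / 2)) =
        x ^ 2 * exp (c ^ 2 / 2 + -(σ * x + c) ^ 2 / 2) from by rw [Real.exp_add]; ring]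
    congr 1
    rw [hc]; congr 1; field_simp; ring
  simp_rw [hpoint]
  rw [integral_const_mul, dv_sub_lemma σ c hσ, dv_eval_g σ c hσ', ← hKdef, ← hEdef]
  simp only [stdNormalPDF]
  rw [← hEdef, hcdf]
  have hγc : γ = c * σ := by rw [hc]; field_simp
  rw [hγc]
  have h2 : Real.sqrt (2 * π) ≠ 0 := dv_s2pi_pos.ne'
  field_simp
  ring
end

section
/- For σ > 0, γ > 0, the fourth moment of the Dual Voigt(γ, σ²) distribution is ∫_ℝ u⁴ p'(u) du = γ⁴/σ⁸ + 6γ²/σ⁶ + 3/σ⁴ − (5γ/σ⁵ + γ³/σ⁷) · φ(γ/σ)/(1 − Φ(γ/σ)), where φ and Φ are the standard normal density and cumulative distribution function. -/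
open MeasureTheory ProbabilityTheory Real

open Set Filter Topology

namespace DualVoigtAux

lemma gauss_total : ∫ t : ℝ, Real.exp (-t^2/2) = Real.sqrt (2*π) := by
  have h := integral_gaussian (1/2 : ℝ)
  have e : (fun x : ℝ => Real.exp (-(1/2) * x^2)) = fun t : ℝ => Real.exp (-t^2/2) := by
    funext t; ring_nf
  rw [e] at h
  rw [h]; norm_num; ring

lemma gauss_integrable : MeasureTheory.Integrable (fun t : ℝ => Real.exp (-t^2/2)) := by
  have e : (fun x : ℝ => Real.exp (-(1/2) * x^2)) = fun t : ℝ => Real.exp (-t^2/2) := by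
    funext t; ring_nf
  rw [← e]; exact integrable_exp_neg_mul_sq (by norm_num)

lemma tail_eq (a : ℝ) :
    ∫ t in Ioi a, Real.exp (-t^2/2) = Real.sqrt (2*π) * (1 - stdNormalCDF a) := by
  have hsplit := intervalIntegral.integral_Iic_add_Ioi
    (gauss_integrable.integrableOn (s := Iic a)) (gauss_integrable.integrableOn (s := Ioi a))
  have hcdf : stdNormalCDF a = 1 / Real.sqrt (2*π) * ∫ t in Iic a, Real.exp (-t^2/2) := by
    unfold stdNormalCDF stdNormalPDF
    rw [integral_const_mul]
  have hs : (0:ℝ) < Real.sqrt (2*π) := Real.sqrt_pos.2 (by positivity)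
  rw [gauss_total] at hsplit
  rw [hcdf]
  set s := Real.sqrt (2*π) with hsdef
  have : s * (1 - 1/s * ∫ t in Iic a, Real.exp (-t^2/2))
      = s - ∫ t in Iic a, Real.exp (-t^2/2) := by
    field_simp
  rw [this]
  linarith [hsplit]

lemma tail_pos (a : ℝ) : 0 < ∫ t in Ioi a, Real.exp (-t^2/2) := by
  rw [setIntegral_pos_iff_support_of_nonneg_ae]
  · have : Function.support (fun t : ℝ => Real.exp (-t^2/2)) = univ := by
      ext t; simp [Function.mem_support, Real.exp_ne_zero]
    rw [this, univ_inter, Real.volume_Ioi]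
    simp
  · filter_upwards with t using (Real.exp_pos _).le
  · exact gauss_integrable.integrableOn

lemma cdf_lt_one (a : ℝ) : 0 < 1 - stdNormalCDF a := by
  have h := tail_pos a
  rw [tail_eq] at h
  have hs : (0:ℝ) < Real.sqrt (2*π) := Real.sqrt_pos.2 (by positivity)
  nlinarith [h, hs, mul_pos hs h]

lemma sub_lemma (σ γ : ℝ) (hσ : 0 < σ) :
    ∫ u in Ioi (0:ℝ), Real.exp (-γ*u - σ^2*u^2/2)
      = Real.exp (γ^2/(2*σ^2)) / σ * ∫ t in Ioi (γ/σ), Real.exp (-t^2/2) := by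
  have key : ∀ u ∈ Ioi (0:ℝ), Real.exp (-γ*u - σ^2*u^2/2)
      = Real.exp (γ^2/(2*σ^2)) * Real.exp (-(σ*u + γ/σ)^2/2) := by
    intro u _
    rw [← Real.exp_add]
    congr 1
    field_simp
    ring
  rw [setIntegral_congr_fun measurableSet_Ioi key, integral_const_mul]
  have h1 := integral_comp_mul_left_Ioi (fun x => Real.exp (-(x + γ/σ)^2/2)) 0 hσ
  simp only [mul_zero, smul_eq_mul] at h1
  rw [h1]
  have h2 : ∫ x in Ioi (0:ℝ), Real.exp (-(x + γ/σ)^2/2)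
      = ∫ t in Ioi (γ/σ), Real.exp (-t^2/2) := by
    have h := (measurePreserving_add_right (volume : Measure ℝ) (γ/σ)).setIntegral_preimage_emb
      (measurableEmbedding_addRight (γ/σ)) (fun t => Real.exp (-t^2/2)) (Ioi (γ/σ))
    simpa using h
  rw [h2]; ring

lemma intexp (σ γ : ℝ) (hσ : 0 < σ) (hγ : 0 < γ) :
    IntegrableOn (fun u : ℝ => Real.exp (-γ*u - σ^2*u^2/2)) (Ioi 0) := by
  apply Integrable.mono' ((integrable_exp_neg_mul_sq (b := σ^2/2) (by positivity)).integrableOn)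
  · exact (Continuous.aestronglyMeasurable (by continuity)).restrict
  · filter_upwards [ae_restrict_mem measurableSet_Ioi] with u hu
    rw [Real.norm_eq_abs, abs_of_pos (Real.exp_pos _)]
    apply Real.exp_le_exp.2
    have hu0 : (0:ℝ) < u := hu
    nlinarith [mul_pos hγ hu0]

lemma int4 (σ γ : ℝ) (hσ : 0 < σ) (hγ : 0 < γ) :
    IntegrableOn (fun u : ℝ => u^4 * Real.exp (-γ*u - σ^2*u^2/2)) (Ioi 0) := by
  apply Integrable.mono' (integrableOn_rpow_mul_exp_neg_mul_sq (b := σ^2/2) (by positivity)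
    (s := 4) (by norm_num))
  · exact (Continuous.aestronglyMeasurable (by continuity)).restrict
  · filter_upwards [ae_restrict_mem measurableSet_Ioi] with u hu
    have hu0 : (0:ℝ) < u := hu
    rw [Real.norm_eq_abs, abs_mul, abs_of_pos (Real.exp_pos _),
      abs_of_nonneg (by positivity : (0:ℝ) ≤ u^4)]
    rw [show (4:ℝ) = ((4:ℕ):ℝ) by norm_num, Real.rpow_natCast]
    apply mul_le_mul_of_nonneg_left _ (by positivity)
    apply Real.exp_le_exp.2
    nlinarith [mul_pos hγ hu0]

lemma expderiv (σ γ : ℝ) (u : ℝ) :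
    HasDerivAt (fun u : ℝ => Real.exp (-γ*u - σ^2*u^2/2))
      (Real.exp (-γ*u - σ^2*u^2/2) * (-γ - σ^2*u)) u := by
  have harg : HasDerivAt (fun u : ℝ => -γ*u - σ^2*u^2/2) (-γ - σ^2*u) u := by
    have h1 : HasDerivAt (fun u : ℝ => -γ*u) (-γ) u := by
      simpa using (hasDerivAt_id u).const_mul (-γ)
    have h2 : HasDerivAt (fun u : ℝ => σ^2*u^2/2) (σ^2*u) u := by
      have := ((hasDerivAt_pow 2 u).const_mul (σ^2)).div_const 2
      refine this.congr_deriv ?_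
      push_cast; ring
    exact h1.sub h2
  simpa [mul_comm] using harg.exp

lemma Gderiv (σ γ : ℝ) (hσ : 0 < σ) (u : ℝ) :
    HasDerivAt (fun u : ℝ =>
        ((-1/σ^2)*u^3 + (γ/σ^4)*u^2 + (-(3*σ^2+γ^2)/σ^6)*u + (5*γ*σ^2+γ^3)/σ^8)
          * Real.exp (-γ*u - σ^2*u^2/2))
      ((u^4 - (γ^4 + 6*γ^2*σ^2 + 3*σ^4)/σ^8) * Real.exp (-γ*u - σ^2*u^2/2)) u := by
  have h3 : HasDerivAt (fun u : ℝ => u^3) (3*u^2) u := by simpa using hasDerivAt_pow 3 u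
  have h2 : HasDerivAt (fun u : ℝ => u^2) (2*u) u := by simpa using hasDerivAt_pow 2 u
  have h1 : HasDerivAt (fun u : ℝ => u) 1 u := hasDerivAt_id u
  have hp : HasDerivAt (fun u : ℝ =>
      (-1/σ^2)*u^3 + (γ/σ^4)*u^2 + (-(3*σ^2+γ^2)/σ^6)*u + (5*γ*σ^2+γ^3)/σ^8)
      ((-1/σ^2)*(3*u^2) + (γ/σ^4)*(2*u) + (-(3*σ^2+γ^2)/σ^6)*1 + 0) u :=
    (((h3.const_mul _).add (h2.const_mul _)).add (h1.const_mul _)).add (hasDerivAt_const u _)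
  have := hp.mul (expderiv σ γ u)
  refine this.congr_deriv ?_
  have hσ' : σ ≠ 0 := hσ.ne'
  field_simp
  ring

lemma Gtend (σ γ : ℝ) (hσ : 0 < σ) (hγ : 0 < γ) :
    Tendsto (fun u : ℝ =>
        ((-1/σ^2)*u^3 + (γ/σ^4)*u^2 + (-(3*σ^2+γ^2)/σ^6)*u + (5*γ*σ^2+γ^3)/σ^8)
          * Real.exp (-γ*u - σ^2*u^2/2)) atTop (𝓝 0) := by
  have hexp2 : Tendsto (fun u : ℝ => Real.exp (-(σ^2*u^2/2))) atTop (𝓝 0) := by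
    apply Real.tendsto_exp_atBot.comp
    have ht : Tendsto (fun u : ℝ => σ^2*u^2/2) atTop atTop := by
      apply Filter.Tendsto.atTop_div_const (by norm_num)
      exact (tendsto_pow_atTop (two_ne_zero)).const_mul_atTop (by positivity)
    exact tendsto_neg_atTop_atBot.comp ht
  have hmono : ∀ k : ℕ, Tendsto (fun u : ℝ => u^k * Real.exp (-(γ*u))) atTop (𝓝 0) := by
    intro k
    have h1 : Tendsto (fun x : ℝ => x^k * Real.exp (-x)) atTop (𝓝 0) :=
      tendsto_pow_mul_exp_neg_atTop_nhds_zero k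
    have h2 : Tendsto (fun u : ℝ => γ*u) atTop atTop :=
      tendsto_id.const_mul_atTop hγ
    have h3 := (h1.comp h2).const_mul ((γ^k)⁻¹)
    rw [mul_zero] at h3
    apply h3.congr
    intro u
    simp only [Function.comp]
    rw [mul_pow]
    field_simp
  have hpoly : Tendsto (fun u : ℝ =>
      ((-1/σ^2)*u^3 + (γ/σ^4)*u^2 + (-(3*σ^2+γ^2)/σ^6)*u + (5*γ*σ^2+γ^3)/σ^8)
        * Real.exp (-(γ*u))) atTop (𝓝 0) := by
    have h := ((((hmono 3).const_mul (-1/σ^2)).add ((hmono 2).const_mul (γ/σ^4))).add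
      ((hmono 1).const_mul (-(3*σ^2+γ^2)/σ^6))).add ((hmono 0).const_mul ((5*γ*σ^2+γ^3)/σ^8))
    norm_num at h
    apply h.congr
    intro u
    ring
  have := hpoly.mul hexp2
  rw [mul_zero] at this
  apply this.congr
  intro u
  rw [mul_assoc, ← Real.exp_add]
  ring_nf

lemma ftc (σ γ : ℝ) (hσ : 0 < σ) (hγ : 0 < γ) :
    ∫ u in Ioi (0:ℝ), (u^4 - (γ^4 + 6*γ^2*σ^2 + 3*σ^4)/σ^8) * Real.exp (-γ*u - σ^2*u^2/2)
      = -((5*γ*σ^2 + γ^3)/σ^8) := by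
  have f'int : IntegrableOn (fun u : ℝ =>
      (u^4 - (γ^4 + 6*γ^2*σ^2 + 3*σ^4)/σ^8) * Real.exp (-γ*u - σ^2*u^2/2)) (Ioi 0) := by
    have h := (int4 σ γ hσ hγ).sub ((intexp σ γ hσ hγ).const_mul
      ((γ^4 + 6*γ^2*σ^2 + 3*σ^4)/σ^8))
    apply MeasureTheory.IntegrableOn.congr_fun h _ measurableSet_Ioi
    intro u _
    simp only [Pi.sub_apply]
    ring
  have h := integral_Ioi_of_hasDerivAt_of_tendsto' (a := 0)
    (fun u _ => Gderiv σ γ hσ u) f'int (Gtend σ γ hσ hγ)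
  rw [h]
  norm_num

lemma moment4_Ioi (σ γ : ℝ) (hσ : 0 < σ) (hγ : 0 < γ) :
    ∫ u in Ioi (0:ℝ), u^4 * Real.exp (-γ*u - σ^2*u^2/2)
      = (γ^4 + 6*γ^2*σ^2 + 3*σ^4)/σ^8 * (∫ u in Ioi (0:ℝ), Real.exp (-γ*u - σ^2*u^2/2))
        - (5*γ*σ^2 + γ^3)/σ^8 := by
  have h := ftc σ γ hσ hγ
  have he : ∫ u in Ioi (0:ℝ), (u^4 - (γ^4 + 6*γ^2*σ^2 + 3*σ^4)/σ^8) * Real.exp (-γ*u - σ^2*u^2/2)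
      = ∫ u in Ioi (0:ℝ), (u^4 * Real.exp (-γ*u - σ^2*u^2/2)
        - (γ^4 + 6*γ^2*σ^2 + 3*σ^4)/σ^8 * Real.exp (-γ*u - σ^2*u^2/2)) := by
    apply setIntegral_congr_fun measurableSet_Ioi
    intro u _
    ring
  rw [he, integral_sub (int4 σ γ hσ hγ) ((intexp σ γ hσ hγ).const_mul _),
    integral_const_mul] at h
  linarith [h]

end DualVoigtAux

/-- the fourth moment of the Dual Voigt(γ, σ²)
distribution is γ⁴/σ⁸ + 6γ²/σ⁶ + 3/σ⁴ − (5γ/σ⁵ + γ³/σ⁷)·φ(γ/σ)/(1 − Φ(γ/σ)). -/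
theorem dualVoigt_fourth_moment (σ γ : ℝ) (hσ : 0 < σ) (hγ : 0 < γ) :
    (∫ u : ℝ, u ^ 4 * dualVoigtDensity σ γ u) =
      γ ^ 4 / σ ^ 8 + 6 * γ ^ 2 / σ ^ 6 + 3 / σ ^ 4 -
        (5 * γ / σ ^ 5 + γ ^ 3 / σ ^ 7) *
          (stdNormalPDF (γ / σ) / (1 - stdNormalCDF (γ / σ))) := by
  classical
  set N : ℝ := 1 / (2 * (1 - stdNormalCDF (γ / σ))) * (σ / Real.sqrt (2 * π)) *
    Real.exp (-γ ^ 2 / (2 * σ ^ 2)) with hN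
  have habs : (fun u : ℝ => u ^ 4 * dualVoigtDensity σ γ u)
      = fun u : ℝ => (fun x : ℝ => N * (x^4 * Real.exp (-γ*x - σ^2*x^2/2))) |u| := by
    funext u
    simp only [dualVoigtDensity, hN]
    have h4 : |u|^4 = u^4 := by
      rw [← abs_pow, abs_of_nonneg (by positivity)]
    have h2 : |u|^2 = u^2 := sq_abs u
    rw [h4, h2]
    ring
  rw [habs,
    integral_comp_abs (f := fun x : ℝ => N * (x^4 * Real.exp (-γ*x - σ^2*x^2/2))),
    integral_const_mul,
    DualVoigtAux.moment4_Ioi σ γ hσ hγ, DualVoigtAux.sub_lemma σ γ hσ,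
    DualVoigtAux.tail_eq (γ/σ)]
  have hΦ : 0 < 1 - stdNormalCDF (γ/σ) := DualVoigtAux.cdf_lt_one (γ/σ)
  have hs : (0:ℝ) < Real.sqrt (2*π) := Real.sqrt_pos.2 (by positivity)
  rw [hN, stdNormalPDF]
  rw [show -(γ/σ)^2/2 = -(γ^2/(2*σ^2)) by field_simp,
    show -γ^2/(2*σ^2) = -(γ^2/(2*σ^2)) by ring, Real.exp_neg]
  have hE : Real.exp (γ^2/(2*σ^2)) ≠ 0 := (Real.exp_pos _).ne'
  field_simp
end
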